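/- arXiv:2101.03650 — 4 statements merged into one kernel-verified Lean document; each statement's English description precedes it below -/
import Mathlib

section
/- Let α_B, α_E, λ_B, λ_E be positive reals with α_B ≥ α_E and λ_E/α_E ≥ λ_B/α_B, where at least one of these inequalities is strict. Define Π(x) = (α_B - α_E)x + λ_E·log(1 + α_E·x/λ_E) - λ_B·log(1 + α_B·x/λ_B). Then Π is strictly increasing on (0, ∞), i.e., Π(x) > 0 for all x > 0. -/
open Real Set

/-- Π(x) = (α_B - α_E)x + λ_E·log(1 + α_E x/λ_E) - λ_B·log(1 + α_B x/λ_B)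
is strictly increasing on (0,∞) (from 0), i.e. Π(x) > 0 for all x > 0. -/
theorem stmt0 (aB aE lB lE : ℝ) (haB : 0 < aB) (haE : 0 < aE) (hlB : 0 < lB)
    (hlE : 0 < lE) (h1 : aE ≤ aB) (h2 : lB / aB ≤ lE / aE)
    (hstrict : aE < aB ∨ lB / aB < lE / aE) :
    StrictMonoOn (fun x : ℝ => (aB - aE) * x + lE * Real.log (1 + aE * x / lE)
      - lB * Real.log (1 + aB * x / lB)) (Set.Ici 0) ∧
    ∀ x : ℝ, 0 < x →
      0 < (aB - aE) * x + lE * Real.log (1 + aE * x / lE)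
        - lB * Real.log (1 + aB * x / lB) := by
  set f : ℝ → ℝ := fun x => (aB - aE) * x + lE * Real.log (1 + aE * x / lE)
      - lB * Real.log (1 + aB * x / lB) with hf
  have h2' : lB * aE ≤ lE * aB := by
    rw [div_le_div_iff₀ haB haE] at h2; linarith
  have hstrict' : aE < aB ∨ lB * aE < lE * aB := by
    rcases hstrict with h | h
    · exact Or.inl h
    · right; rw [div_lt_div_iff₀ haB haE] at h; linarith
  have hder : ∀ x : ℝ, 0 ≤ x →
      HasDerivAt f ((aB - aE) + lE * ((aE / lE) / (1 + aE * x / lE))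
        - lB * ((aB / lB) / (1 + aB * x / lB))) x := by
    intro x hx
    have hu : 0 < 1 + aE * x / lE := by positivity
    have hv : 0 < 1 + aB * x / lB := by positivity
    have dU : HasDerivAt (fun x : ℝ => 1 + aE * x / lE) (aE / lE) x := by
      simpa using (((hasDerivAt_id x).const_mul aE).div_const lE).const_add 1
    have dV : HasDerivAt (fun x : ℝ => 1 + aB * x / lB) (aB / lB) x := by
      simpa using (((hasDerivAt_id x).const_mul aB).div_const lB).const_add 1
    have dlogU := (dU.log (ne_of_gt hu)).const_mul lE
    have dlogV := (dV.log (ne_of_gt hv)).const_mul lB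
    have dlin : HasDerivAt (fun x : ℝ => (aB - aE) * x) (aB - aE) x := by
      simpa using (hasDerivAt_id x).const_mul (aB - aE)
    exact (dlin.add dlogU).sub dlogV
  have hpos : ∀ x : ℝ, 0 < x →
      0 < (aB - aE) + lE * ((aE / lE) / (1 + aE * x / lE))
        - lB * ((aB / lB) / (1 + aB * x / lB)) := by
    intro x hx
    have hu : 0 < 1 + aE * x / lE := by positivity
    have hv : 0 < 1 + aB * x / lB := by positivity
    have hu' : 0 < lE + aE * x := by positivity
    have hv' : 0 < lB + aB * x := by positivity
    have heq : (aB - aE) + lE * ((aE / lE) / (1 + aE * x / lE))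
        - lB * ((aB / lB) / (1 + aB * x / lB))
        = (x * (aB ^ 2 * lE - aE ^ 2 * lB) + x ^ 2 * (aE * aB * (aB - aE)))
          / ((lE + aE * x) * (lB + aB * x)) := by
      field_simp
      ring
    rw [heq]
    apply div_pos _ (mul_pos hu' hv')
    rcases hstrict' with h | h
    · nlinarith [mul_pos (mul_pos hx hx) (mul_pos (mul_pos haE haB) (sub_pos.2 h)),
        mul_nonneg (mul_nonneg hx.le haB.le) (sub_nonneg.2 h2'),
        mul_nonneg (mul_nonneg hx.le (mul_pos haE hlB).le) (sub_nonneg.2 h1)]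
    · nlinarith [mul_pos (mul_pos hx haB) (sub_pos.2 h),
        mul_nonneg (mul_nonneg hx.le (mul_pos haE hlB).le) (sub_nonneg.2 h1),
        mul_nonneg (mul_nonneg hx.le hx.le)
          (mul_nonneg (mul_nonneg haE.le haB.le) (sub_nonneg.2 h1))]
  have hmono : StrictMonoOn f (Set.Ici 0) := by
    apply strictMonoOn_of_deriv_pos (convex_Ici 0)
    · exact fun x hx => (hder x hx).continuousAt.continuousWithinAt
    · intro x hx
      rw [interior_Ici] at hx
      rw [(hder x (le_of_lt hx)).deriv]
      exact hpos x hx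
  refine ⟨hmono, fun x hx => ?_⟩
  have h0 : f 0 = 0 := by simp [hf]
  have := hmono (Set.self_mem_Ici) (Set.mem_Ici.2 hx.le) hx
  rw [h0] at this
  exact this
end

section
/- Let α_B, α_E, λ_B, λ_E be positive reals with α_B ≥ α_E and λ_E/α_E ≥ λ_B/α_B, at least one inequality strict. Define Φ(x) = (α_E - α_B) + (α_B + λ_B/x)·log(1 + α_B·x/λ_B) - (α_E + λ_E/x)·log(1 + α_E·x/λ_E) for x > 0. Then the derivative Φ'(x) = [(α_B - α_E)x + λ_E·log(1 + α_E x/λ_E) - λ_B·log(1 + α_B x/λ_B)]/x² is strictly positive for all x > 0, so Φ is strictly increasing on (0, ∞). -/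
open Real Set


noncomputable def psi (c l : ℝ) : ℝ := c - l * Real.log (1 + c / l)

lemma log_add_one_lt {s : ℝ} (hs : 0 < s) : Real.log (1 + s) < s := by
  have := Real.log_lt_sub_one_of_pos (by linarith : (0:ℝ) < 1 + s) (by linarith)
  linarith

lemma lt_log_add_one {s : ℝ} (hs : 0 < s) : s / (1 + s) < Real.log (1 + s) := by
  have h1 : (0:ℝ) < 1 + s := by linarith
  have h2 : (1 + s)⁻¹ ≠ 1 := by
    intro h
    rw [inv_eq_one] at h
    linarith
  have h3 := Real.log_lt_sub_one_of_pos (inv_pos.mpr h1) h2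
  rw [Real.log_inv] at h3
  have h4 : (1 + s)⁻¹ - 1 = -(s / (1 + s)) := by field_simp; ring
  linarith

lemma psi_pos {c l : ℝ} (hc : 0 < c) (hl : 0 < l) : 0 < psi c l := by
  have hs : 0 < c / l := div_pos hc hl
  have := log_add_one_lt hs
  have : l * Real.log (1 + c / l) < l * (c / l) := by
    exact mul_lt_mul_of_pos_left this hl
  rw [mul_div_cancel₀ _ hl.ne'] at this
  simp only [psi]; linarith

lemma psi_homog {t c l : ℝ} (ht : 0 < t) (hl : l ≠ 0) : psi (t*c) (t*l) = t * psi c l := by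
  simp only [psi]
  rw [mul_div_mul_left _ _ ht.ne']
  ring

lemma hasDerivAt_psi_l {c l : ℝ} (hc : 0 < c) (hl : 0 < l) :
    HasDerivAt (fun l => psi c l) (c / (l + c) - Real.log (1 + c / l)) l := by
  have harg : 0 < 1 + c / l := by positivity
  have h1 : HasDerivAt (fun l : ℝ => 1 + c / l) (-(c / l ^ 2)) l := by
    have h := ((hasDerivAt_inv hl.ne').const_mul c).const_add 1
    simp only [div_eq_mul_inv]
    refine h.congr_deriv ?_
    field_simp
  have h2 : HasDerivAt (fun l : ℝ => Real.log (1 + c / l)) (-(c / l ^ 2) / (1 + c / l)) l :=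
    h1.log harg.ne'
  have h3 := ((hasDerivAt_id l).mul h2).const_sub c
  refine h3.congr_deriv ?_
  have hlc : l + c ≠ 0 := by positivity
  simp only [id]
  field_simp
  ring

lemma psi_strictAntiOn {c : ℝ} (hc : 0 < c) : StrictAntiOn (fun l => psi c l) (Ioi (0:ℝ)) := by
  apply strictAntiOn_of_deriv_neg (convex_Ioi 0)
  · intro l hl
    exact ((hasDerivAt_psi_l hc hl).continuousAt).continuousWithinAt
  · intro l hl
    rw [interior_Ioi] at hl
    have hl' : 0 < l := hl
    rw [(hasDerivAt_psi_l hc hl).deriv]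
    have hs : 0 < c / l := div_pos hc hl
    have := lt_log_add_one hs
    have heq : (c / l) / (1 + c / l) = c / (l + c) := by
      rw [div_eq_div_iff (by positivity) (by positivity)]
      field_simp
    rw [heq] at this
    linarith

lemma psi_key {cB cE lB lE : ℝ} (hcB : 0 < cB) (hcE : 0 < cE) (hlB : 0 < lB) (hlE : 0 < lE)
    (hc : cE ≤ cB) (hl : lB ≤ cB / cE * lE) (hs : cE < cB ∨ lB < cB / cE * lE) :
    psi cE lE < psi cB lB := by
  set t := cB / cE with ht
  have ht1 : 1 ≤ t := (one_le_div hcE).mpr hc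
  have ht0 : 0 < t := by linarith
  have hmid : psi cB (t * lE) = t * psi cE lE := by
    have : cB = t * cE := by rw [ht]; field_simp
    rw [this, psi_homog ht0 hlE.ne']
  have hpos := psi_pos hcE hlE
  have hle1 : psi cE lE ≤ psi cB (t * lE) := by
    rw [hmid]; nlinarith
  have hle2 : psi cB (t * lE) ≤ psi cB lB := by
    rcases eq_or_lt_of_le hl with h | h
    · rw [h]
    · exact le_of_lt ((psi_strictAntiOn hcB) (mem_Ioi.mpr hlB) (mem_Ioi.mpr (by positivity)) h)
  rcases hs with h | h
  · have : 1 < t := (one_lt_div hcE).mpr h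
    have : psi cE lE < psi cB (t * lE) := by rw [hmid]; nlinarith
    linarith
  · have : psi cB (t * lE) < psi cB lB :=
      (psi_strictAntiOn hcB) (mem_Ioi.mpr hlB) (mem_Ioi.mpr (by positivity)) h
    linarith

lemma hasDerivAt_term {a l x : ℝ} (ha : 0 < a) (hl : 0 < l) (hx : 0 < x) :
    HasDerivAt (fun x : ℝ => (a + l / x) * Real.log (1 + a * x / l))
      (a / x - l / x ^ 2 * Real.log (1 + a * x / l)) x := by
  have harg : 0 < 1 + a * x / l := by positivity
  have hf : HasDerivAt (fun x : ℝ => a + l / x) (-(l / x ^ 2)) x := by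
    have h := ((hasDerivAt_inv hx.ne').const_mul l).const_add a
    simp only [div_eq_mul_inv]
    refine h.congr_deriv ?_
    field_simp
  have hg1 : HasDerivAt (fun x : ℝ => 1 + a * x / l) (a / l) x := by
    have h := (((hasDerivAt_id x).const_mul a).div_const l).const_add 1
    refine h.congr_deriv ?_
    simp
  have hg : HasDerivAt (fun x : ℝ => Real.log (1 + a * x / l)) ((a / l) / (1 + a * x / l)) x :=
    hg1.log harg.ne'
  have h := hf.mul hg
  refine h.congr_deriv ?_
  have h0 : l + a * x ≠ 0 := by positivity
  field_simp
  ring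

/-- Φ has derivative Π(x)/x² at every x > 0, this derivative is
strictly positive, and Φ is strictly increasing on (0,∞). -/
theorem stmt1 (aB aE lB lE : ℝ) (haB : 0 < aB) (haE : 0 < aE) (hlB : 0 < lB)
    (hlE : 0 < lE) (h1 : aE ≤ aB) (h2 : lB / aB ≤ lE / aE)
    (hstrict : aE < aB ∨ lB / aB < lE / aE) :
    (∀ x : ℝ, 0 < x →
      HasDerivAt (fun x : ℝ => (aE - aB) + (aB + lB / x) * Real.log (1 + aB * x / lB)
          - (aE + lE / x) * Real.log (1 + aE * x / lE))
        (((aB - aE) * x + lE * Real.log (1 + aE * x / lE)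
          - lB * Real.log (1 + aB * x / lB)) / x ^ 2) x ∧
      0 < ((aB - aE) * x + lE * Real.log (1 + aE * x / lE)
          - lB * Real.log (1 + aB * x / lB)) / x ^ 2) ∧
    StrictMonoOn (fun x : ℝ => (aE - aB) + (aB + lB / x) * Real.log (1 + aB * x / lB)
      - (aE + lE / x) * Real.log (1 + aE * x / lE)) (Set.Ioi 0) := by
  have h2' : lB * aE ≤ lE * aB := by rwa [div_le_div_iff₀ haB haE] at h2
  have key : ∀ x : ℝ, 0 < x →
      HasDerivAt (fun x : ℝ => (aE - aB) + (aB + lB / x) * Real.log (1 + aB * x / lB)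
          - (aE + lE / x) * Real.log (1 + aE * x / lE))
        (((aB - aE) * x + lE * Real.log (1 + aE * x / lE)
          - lB * Real.log (1 + aB * x / lB)) / x ^ 2) x ∧
      0 < ((aB - aE) * x + lE * Real.log (1 + aE * x / lE)
          - lB * Real.log (1 + aB * x / lB)) / x ^ 2 := by
    intro x hx
    constructor
    · have hB := hasDerivAt_term haB hlB hx
      have hE := hasDerivAt_term haE hlE hx
      have h := (hB.const_add (aE - aB)).sub hE
      refine h.congr_deriv ?_
      have hargB : (0:ℝ) < 1 + aB * x / lB := by positivity
      have hargE : (0:ℝ) < 1 + aE * x / lE := by positivity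
      field_simp
      ring
    · have hPi : (aB - aE) * x + lE * Real.log (1 + aE * x / lE)
          - lB * Real.log (1 + aB * x / lB) = psi (aB * x) lB - psi (aE * x) lE := by
        simp only [psi]; ring
      rw [hPi]
      apply div_pos _ (by positivity)
      rw [sub_pos]
      have hr : aB * x / (aE * x) = aB / aE := by
        rw [mul_div_mul_right _ _ hx.ne']
      apply psi_key (by positivity) (by positivity) hlB hlE
        (by nlinarith)
      · rw [hr, div_mul_eq_mul_div, le_div_iff₀ haE]; nlinarith
      · rcases hstrict with h | h
        · left; nlinarith
        · right
          have h' : lB * aE < lE * aB := by rwa [div_lt_div_iff₀ haB haE] at h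
          rw [hr, div_mul_eq_mul_div, lt_div_iff₀ haE]; nlinarith
  refine ⟨key, ?_⟩
  apply strictMonoOn_of_deriv_pos (convex_Ioi 0)
  · intro x hx
    exact ((key x hx).1.continuousAt).continuousWithinAt
  · intro x hx
    rw [interior_Ioi] at hx
    rw [(key x hx).1.deriv]
    exact (key x hx).2
end

section
/- Let α_B, α_E, λ_B, λ_E be positive reals with α_B = α_E and λ_E > λ_B. Define Φ(x) = (α_B + λ_B/x)·log(1 + α_B·x/λ_B) - (α_B + λ_E/x)·log(1 + α_B·x/λ_E) for x > 0. Then the limit of Φ(x) as x → ∞ equals α_B·log(λ_E/λ_B). -/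
open Real Set Filter

lemma aux_log_div : Tendsto (fun x : ℝ => Real.log x / x) atTop (nhds 0) := by
  have h := Real.tendsto_pow_log_div_mul_add_atTop 1 0 1 one_ne_zero
  simpa using h

lemma aux_zero (a l : ℝ) (ha : 0 < a) (hl : 0 < l) :
    Tendsto (fun x : ℝ => (l / x) * Real.log (1 + a * x / l)) atTop (nhds 0) := by
  have hu : Tendsto (fun x : ℝ => 1 + a / l * x) atTop atTop :=
    tendsto_atTop_add_const_left _ 1 (Tendsto.const_mul_atTop (div_pos ha hl) tendsto_id)
  have h1 : Tendsto (fun x : ℝ => Real.log (1 + a/l*x) / (1 + a/l*x)) atTop (nhds 0) :=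
    aux_log_div.comp hu
  have h2 : Tendsto (fun x : ℝ => (1 + a/l*x) / x) atTop (nhds (a/l)) := by
    have h := tendsto_inv_atTop_zero.add (tendsto_const_nhds (x := a/l) (f := atTop))
    rw [zero_add] at h
    refine h.congr' ?_
    filter_upwards [eventually_gt_atTop 0] with x hx
    field_simp
  have h3 := (h1.mul h2).const_mul l
  have hz : l * (0 * (a/l)) = 0 := by ring
  rw [hz] at h3
  refine h3.congr' ?_
  filter_upwards [eventually_gt_atTop 0] with x hx
  have hv : 0 < 1 + a/l*x := by positivity
  have harg : a/l*x = a*x/l := by ring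
  rw [harg] at hv ⊢
  field_simp

lemma aux_ratio (a lB lE : ℝ) (ha : 0 < a) (hlB : 0 < lB) (hlE : 0 < lE) :
    Tendsto (fun x : ℝ => (1 + a*x/lB)/(1 + a*x/lE)) atTop (nhds (lE/lB)) := by
  have h0 : Tendsto (fun x : ℝ => (x⁻¹ + a/lB)/(x⁻¹ + a/lE)) atTop
      (nhds ((0 + a/lB)/(0 + a/lE))) :=
    (tendsto_inv_atTop_zero.add tendsto_const_nhds).div
      (tendsto_inv_atTop_zero.add tendsto_const_nhds) (by positivity)
  have heq : (0 + a/lB)/(0 + a/lE) = lE/lB := by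
    field_simp
    ring
  rw [heq] at h0
  refine h0.congr' ?_
  filter_upwards [eventually_gt_atTop 0] with x hx
  have h1 : (0:ℝ) < 1 + a*x/lE := by positivity
  field_simp

/-- with equal channel gains α_B = α_E and λ_E > λ_B,
Φ(x) → α_B·log(λ_E/λ_B) as x → ∞. -/
theorem stmt2 (aB aE lB lE : ℝ) (haB : 0 < aB) (hlB : 0 < lB) (hlE : 0 < lE)
    (heq : aB = aE) (hlt : lB < lE) :
    Filter.Tendsto (fun x : ℝ =>
        (aB + lB / x) * Real.log (1 + aB * x / lB)
          - (aB + lE / x) * Real.log (1 + aB * x / lE))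
      Filter.atTop (nhds (aB * Real.log (lE / lB))) := by
  have hmain : Tendsto (fun x : ℝ =>
      aB * Real.log ((1 + aB*x/lB)/(1 + aB*x/lE))
        + (lB/x) * Real.log (1 + aB*x/lB)
        - (lE/x) * Real.log (1 + aB*x/lE)) atTop
      (nhds (aB * Real.log (lE/lB) + 0 - 0)) := by
    refine Tendsto.sub (Tendsto.add ?_ ?_) ?_
    · exact ((aux_ratio aB lB lE haB hlB hlE).log (by positivity)).const_mul aB
    · exact aux_zero aB lB haB hlB
    · exact aux_zero aB lE haB hlE
  rw [add_zero, sub_zero] at hmain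
  refine hmain.congr' ?_
  filter_upwards [eventually_gt_atTop 0] with x hx
  have h1 : (0:ℝ) < 1 + aB*x/lB := by positivity
  have h2 : (0:ℝ) < 1 + aB*x/lE := by positivity
  rw [Real.log_div h1.ne' h2.ne']
  ring
end

section
/- Let α_B, α_E, λ_B, λ_E > 0 with α_B = α_E and λ_E/α_E > λ_B/α_B, and set λ_D = λ_E - λ_B > 0. Define ψ(x) = (α_E·x + λ_E)·log((α_B·x + λ_B)/(α_E·x + λ_E)) for x ≥ 0. Then ψ is strictly increasing on [0,∞) and lim_{x→∞} ψ(x) = -λ_D; in particular ψ(x) ≤ -λ_D for all x ≥ 0. -/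
open Real Set Filter

/-- ψ(x) = (α_E x + λ_E)·log((α_B x + λ_B)/(α_E x + λ_E)) is strictly
increasing on [0,∞), tends to -λ_D as x → ∞, and ψ(x) ≤ -λ_D for all x ≥ 0,
where λ_D = λ_E - λ_B > 0 and α_B = α_E. -/
theorem stmt3 (aB aE lB lE : ℝ) (haB : 0 < aB) (haE : 0 < aE) (hlB : 0 < lB)
    (hlE : 0 < lE) (heq : aB = aE) (hdeg : lB / aB < lE / aE) :
    StrictMonoOn (fun x : ℝ => (aE * x + lE) * Real.log ((aB * x + lB) / (aE * x + lE)))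
      (Set.Ici 0) ∧
    Filter.Tendsto (fun x : ℝ => (aE * x + lE) * Real.log ((aB * x + lB) / (aE * x + lE)))
      Filter.atTop (nhds (-(lE - lB))) ∧
    ∀ x : ℝ, 0 ≤ x →
      (aE * x + lE) * Real.log ((aB * x + lB) / (aE * x + lE)) ≤ -(lE - lB) := by
  subst heq
  have hlt : lB < lE := by
    rw [div_lt_div_iff₀ haB haB] at hdeg; nlinarith
  set a := aB with ha
  have hp : ∀ x : ℝ, 0 ≤ x → 0 < a * x + lB := fun x hx => by positivity
  have hq : ∀ x : ℝ, 0 ≤ x → 0 < a * x + lE := fun x hx => by positivity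
  -- auxiliary function with log of quotient expanded
  set g : ℝ → ℝ := fun x => (a * x + lE) * (Real.log (a * x + lB) - Real.log (a * x + lE))
    with hg
  have heqon : Set.EqOn (fun x : ℝ => (a * x + lE) * Real.log ((a * x + lB) / (a * x + lE)))
      g (Set.Ici 0) := by
    intro x hx
    simp only [hg, Real.log_div (hp x hx).ne' (hq x hx).ne']
  have hgmono : StrictMonoOn g (Set.Ici 0) := by
    apply strictMonoOn_of_deriv_pos (convex_Ici 0)
    · apply ContinuousOn.mul
      · fun_prop
      · apply ContinuousOn.sub
        · exact Real.continuousOn_log.comp (by fun_prop)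
            (fun x hx => Set.mem_compl_singleton_iff.mpr (hp x hx).ne')
        · exact Real.continuousOn_log.comp (by fun_prop)
            (fun x hx => Set.mem_compl_singleton_iff.mpr (hq x hx).ne')
    · intro x hx
      rw [interior_Ici] at hx
      have hx0 : (0:ℝ) ≤ x := le_of_lt hx
      have hpx := hp x hx0
      have hqx := hq x hx0
      have h1 : HasDerivAt (fun x : ℝ => a * x + lB) a x := by
        simpa using ((hasDerivAt_id x).const_mul a).add_const lB
      have h2 : HasDerivAt (fun x : ℝ => a * x + lE) a x := by
        simpa using ((hasDerivAt_id x).const_mul a).add_const lE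
      have hd : HasDerivAt g
          (a * (Real.log (a * x + lB) - Real.log (a * x + lE))
            + (a * x + lE) * (a / (a * x + lB) - a / (a * x + lE))) x := by
        exact h2.mul ((h1.log hpx.ne').sub (h2.log hqx.ne'))
      rw [hd.deriv]
      -- positivity: let r = q/p > 1, use log r < r - 1
      have hr1 : 1 < (a * x + lE) / (a * x + lB) := (one_lt_div hpx).mpr (by linarith)
      have hlog : Real.log ((a * x + lE) / (a * x + lB)) <
          (a * x + lE) / (a * x + lB) - 1 :=
        Real.log_lt_sub_one_of_pos (lt_trans one_pos hr1) (ne_of_gt hr1)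
      rw [Real.log_div hqx.ne' hpx.ne'] at hlog
      have key : Real.log (a * x + lB) - Real.log (a * x + lE)
          + ((a * x + lE) / (a * x + lB) - 1) > 0 := by linarith
      have hrw : (a * x + lE) * (a / (a * x + lB) - a / (a * x + lE))
          = a * ((a * x + lE) / (a * x + lB) - 1) := by
        field_simp
      rw [hrw]
      calc (0:ℝ) < a * (Real.log (a * x + lB) - Real.log (a * x + lE)
              + ((a * x + lE) / (a * x + lB) - 1)) := by positivity
        _ = a * (Real.log (a * x + lB) - Real.log (a * x + lE))
              + a * ((a * x + lE) / (a * x + lB) - 1) := by ring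
  have hmono : StrictMonoOn
      (fun x : ℝ => (a * x + lE) * Real.log ((a * x + lB) / (a * x + lE)))
      (Set.Ici 0) := hgmono.congr heqon.symm
  -- limit
  have hutop : Filter.Tendsto (fun x : ℝ => a * x + lE) Filter.atTop Filter.atTop := by
    apply Filter.tendsto_atTop_add_const_right
    exact Filter.Tendsto.const_mul_atTop haB tendsto_id
  have hbase := (Real.tendsto_mul_log_one_add_div_atTop (lB - lE)).comp hutop
  have hlim : Filter.Tendsto
      (fun x : ℝ => (a * x + lE) * Real.log ((a * x + lB) / (a * x + lE)))
      Filter.atTop (nhds (-(lE - lB))) := by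
    have : -(lE - lB) = lB - lE := by ring
    rw [this]
    apply hbase.congr'
    filter_upwards [Filter.eventually_ge_atTop (0:ℝ)] with x hx
    have hqx := hq x hx
    simp only [Function.comp]
    congr 1
    rw [eq_comm]
    congr 1
    field_simp
    ring
  refine ⟨hmono, hlim, ?_⟩
  intro x hx
  apply ge_of_tendsto hlim
  filter_upwards [Filter.eventually_ge_atTop x] with y hy
  exact hmono.monotoneOn hx (le_trans hx hy) hy
end
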